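/- Let J be a finite set with positive integer durations d_j, time horizon 𝒯 = {0,…,T−1}, and P ⊆ J×J a set of precedence pairs. Consider the polytope Q of all x ∈ ℝ^{J×𝒯} with x_{jt} ≥ 0 for all j, t, Σ_{t∈𝒯} x_{jt} = 1 for all j ∈ J, and Σ_{s=t}^{T−1} x_{is} + Σ_{s=0}^{min(t+d_i−1,T−1)} x_{js} ≤ 1 for all (i,j) ∈ P and all t ∈ 𝒯. Then every extreme point of Q has all coordinates in {0,1}; consequently, for every cost matrix c ∈ ℝ^{J×𝒯}, if Q is nonempty then the minimum of Σ_{j,t} c_{jt} x_{jt} over Q is attained at some binary x. -/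

import Mathlib

/-- The feasible polytope `Q` of the time-indexed project scheduling problem with
start-time dependent costs: nonnegative `x : J → Fin T → ℝ`, each row summing to one,
and the precedence inequalities for every pair `(i, j) ∈ P` and time `t`. -/
def schedulingPolytope {J : Type*} [Fintype J] (T : ℕ) (d : J → ℕ)
    (P : Set (J × J)) : Set (J → Fin T → ℝ) :=
  { x | (∀ j t, 0 ≤ x j t) ∧ (∀ j, ∑ t, x j t = 1) ∧
    ∀ q ∈ P, ∀ t : Fin T,
      (∑ s ∈ Finset.univ.filter (fun s : Fin T => (t : ℕ) ≤ (s : ℕ)), x q.1 s) +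
        (∑ s ∈ Finset.univ.filter
            (fun s : Fin T => (s : ℕ) ≤ min ((t : ℕ) + d q.1 - 1) (T - 1)), x q.2 s) ≤ 1 }

namespace Stmt7Aux
open Finset
set_option linter.unusedSectionVars false

variable {J : Type*} [Fintype J] {T : ℕ} {d : J → ℕ} {P : Set (J × J)}

/-- cumulative sum below time `k` -/
noncomputable def F (x : J → Fin T → ℝ) (j : J) (k : ℕ) : ℝ :=
  ∑ s ∈ Finset.univ.filter (fun s : Fin T => (s : ℕ) < k), x j s

lemma F_zero (x : J → Fin T → ℝ) (j : J) : F x j 0 = 0 := by simp [F]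

lemma F_mono {x : J → Fin T → ℝ} (hx0 : ∀ j t, 0 ≤ x j t) (j : J) {k l : ℕ} (h : k ≤ l) :
    F x j k ≤ F x j l := by
  apply Finset.sum_le_sum_of_subset_of_nonneg
  · intro s hs; simp only [Finset.mem_filter, Finset.mem_univ, true_and] at hs ⊢; omega
  · intro s _ _; exact hx0 j s

lemma F_nonneg {x : J → Fin T → ℝ} (hx0 : ∀ j t, 0 ≤ x j t) (j : J) (k : ℕ) :
    0 ≤ F x j k := Finset.sum_nonneg fun s _ => hx0 j s

lemma F_top {x : J → Fin T → ℝ} (hx1 : ∀ j, ∑ t, x j t = 1) (j : J) {k : ℕ} (hk : T ≤ k) :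
    F x j k = 1 := by
  rw [F, Finset.filter_true_of_mem (fun s _ => lt_of_lt_of_le s.isLt hk)]
  exact hx1 j

lemma F_le_one {x : J → Fin T → ℝ} (hx0 : ∀ j t, 0 ≤ x j t) (hx1 : ∀ j, ∑ t, x j t = 1)
    (j : J) (k : ℕ) : F x j k ≤ 1 := by
  rcases le_total T k with h | h
  · exact le_of_eq (F_top hx1 j h)
  · exact (F_mono hx0 j h).trans (le_of_eq (F_top hx1 j le_rfl))

lemma F_succ (x : J → Fin T → ℝ) (j : J) {k : ℕ} (hk : k < T) :
    F x j (k + 1) = F x j k + x j ⟨k, hk⟩ := by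
  rw [F, F]
  have : Finset.univ.filter (fun s : Fin T => (s : ℕ) < k + 1)
      = insert ⟨k, hk⟩ (Finset.univ.filter (fun s : Fin T => (s : ℕ) < k)) := by
    ext s
    simp [Fin.ext_iff]
    omega
  rw [this, Finset.sum_insert (by simp)]
  ring


/-- the quantile: least `k` with `θ ≤ F x j (k+1)` -/
noncomputable def S (x : J → Fin T → ℝ) (j : J) (θ : ℝ) : ℕ :=
  sInf {k : ℕ | θ ≤ F x j (k + 1)}

lemma S_nonempty {x : J → Fin T → ℝ} (hT : 0 < T) (hx1 : ∀ j, ∑ t, x j t = 1) {θ : ℝ}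
    (hθ1 : θ ≤ 1) (j : J) : (T - 1) ∈ {k : ℕ | θ ≤ F x j (k + 1)} := by
  have h : T - 1 + 1 = T := by omega
  rw [Set.mem_setOf_eq, h, F_top hx1 j le_rfl]
  exact hθ1

lemma S_lt {x : J → Fin T → ℝ} (hT : 0 < T) (hx1 : ∀ j, ∑ t, x j t = 1) {θ : ℝ}
    (hθ1 : θ ≤ 1) (j : J) : S x j θ < T := by
  have h := Nat.sInf_le (S_nonempty hT hx1 hθ1 j)
  have : S x j θ ≤ T - 1 := h
  omega

lemma S_spec {x : J → Fin T → ℝ} (hT : 0 < T) (hx1 : ∀ j, ∑ t, x j t = 1) {θ : ℝ}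
    (hθ1 : θ ≤ 1) (j : J) : θ ≤ F x j (S x j θ + 1) :=
  Nat.sInf_mem ⟨T - 1, S_nonempty hT hx1 hθ1 j⟩

lemma S_min {x : J → Fin T → ℝ} {θ : ℝ} (j : J) {k : ℕ} (hk : k < S x j θ) :
    F x j (k + 1) < θ := by
  have h := Nat.notMem_of_lt_sInf hk
  rw [Set.mem_setOf_eq] at h
  linarith [lt_of_not_ge h]

lemma F_S_lt {x : J → Fin T → ℝ} {θ : ℝ} (hθ0 : 0 < θ) (j : J) : F x j (S x j θ) < θ := by
  rcases Nat.eq_zero_or_eq_succ_pred (S x j θ) with h | h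
  · rw [h, F_zero]; exact hθ0
  · rw [h]
    exact S_min (j := j) (by omega)

/-- binary rounding at quantile θ -/
noncomputable def Y (x : J → Fin T → ℝ) (θ : ℝ) : J → Fin T → ℝ :=
  fun j t => if (t : ℕ) = S x j θ then 1 else 0

lemma Y_binary (x : J → Fin T → ℝ) (θ : ℝ) (j : J) (t : Fin T) :
    Y x θ j t = 0 ∨ Y x θ j t = 1 := by
  unfold Y; split_ifs <;> simp

lemma sum_ind {n : ℕ} (hn : n < T) (p : Fin T → Prop) [DecidablePred p] :
    ∑ s ∈ Finset.univ.filter p, (if (s : ℕ) = n then (1 : ℝ) else 0)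
      = if p ⟨n, hn⟩ then 1 else 0 := by
  have h1 : ∀ s : Fin T, ((s : ℕ) = n) ↔ (s = ⟨n, hn⟩) := by
    intro s; simp [Fin.ext_iff]
  calc ∑ s ∈ Finset.univ.filter p, (if (s : ℕ) = n then (1 : ℝ) else 0)
      = ∑ s ∈ Finset.univ.filter p, (if s = ⟨n, hn⟩ then (1 : ℝ) else 0) := by
        simp only [h1]
    _ = if (⟨n, hn⟩ : Fin T) ∈ Finset.univ.filter p then 1 else 0 :=
        Finset.sum_ite_eq' _ _ _
    _ = if p ⟨n, hn⟩ then 1 else 0 := by simp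

lemma Y_sum {x : J → Fin T → ℝ} {θ : ℝ} (hT : 0 < T)
    (hx1 : ∀ j, ∑ t, x j t = 1) (hθ1 : θ ≤ 1) (j : J) : ∑ t, Y x θ j t = 1 := by
  have hlt := S_lt hT hx1 hθ1 (x := x) (θ := θ) j
  have h := sum_ind (T := T) hlt (fun _ => True)
  rw [Finset.filter_true] at h
  simp only [if_true] at h
  exact h

lemma constr {x : J → Fin T → ℝ} (hx : x ∈ schedulingPolytope T d P)
    {i j : J} (hij : (i, j) ∈ P) (t : Fin T) :
    F x j (min ((t : ℕ) + d i - 1) (T - 1) + 1) ≤ F x i (t : ℕ) := by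
  obtain ⟨hx0, hx1, hx2⟩ := hx
  have hc := hx2 (i, j) hij t
  have hA : (∑ s ∈ Finset.univ.filter (fun s : Fin T => (t : ℕ) ≤ (s : ℕ)), x i s)
      = 1 - F x i (t : ℕ) := by
    have hsplit := Finset.sum_filter_add_sum_filter_not Finset.univ
      (fun s : Fin T => (s : ℕ) < (t : ℕ)) (x i)
    have hfe : Finset.univ.filter (fun s : Fin T => ¬ (s : ℕ) < (t : ℕ))
        = Finset.univ.filter (fun s : Fin T => (t : ℕ) ≤ (s : ℕ)) := by
      ext s; simp [not_lt]
    rw [hfe, hx1 i] at hsplit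
    have : F x i (t : ℕ) = ∑ s ∈ Finset.univ.filter (fun s : Fin T => (s : ℕ) < (t : ℕ)), x i s := rfl
    linarith [hsplit]
  have hB : (∑ s ∈ Finset.univ.filter
      (fun s : Fin T => (s : ℕ) ≤ min ((t : ℕ) + d i - 1) (T - 1)), x j s)
      = F x j (min ((t : ℕ) + d i - 1) (T - 1) + 1) := by
    have hfe : Finset.univ.filter (fun s : Fin T => (s : ℕ) ≤ min ((t : ℕ) + d i - 1) (T - 1))
        = Finset.univ.filter (fun s : Fin T => (s : ℕ) < min ((t : ℕ) + d i - 1) (T - 1) + 1) := by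
      ext s; simp [Nat.lt_succ_iff]
    rw [hfe]; rfl
  rw [hA, hB] at hc
  linarith

lemma Y_mem {x : J → Fin T → ℝ} (hT : 0 < T) (hx : x ∈ schedulingPolytope T d P)
    {θ : ℝ} (hθ0 : 0 < θ) (hθ1 : θ ≤ 1) : Y x θ ∈ schedulingPolytope T d P := by
  obtain ⟨hx0, hx1, hx2⟩ := hx
  refine ⟨fun j t => by unfold Y; split_ifs <;> norm_num, fun j => Y_sum hT hx1 hθ1 j, ?_⟩
  rintro ⟨i, j⟩ hij t
  have h1 := sum_ind (S_lt hT hx1 hθ1 (x := x) i) (fun s : Fin T => (t : ℕ) ≤ (s : ℕ))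
  have h2 := sum_ind (S_lt hT hx1 hθ1 (x := x) j)
    (fun s : Fin T => (s : ℕ) ≤ min ((t : ℕ) + d i - 1) (T - 1))
  simp only [Y]
  rw [h1, h2]
  split_ifs with ha hb hb
  · exfalso
    have hSj : S x j θ + 1 ≤ min ((t : ℕ) + d i - 1) (T - 1) + 1 := by
      simpa using Nat.succ_le_succ hb
    have c1 : θ ≤ F x j (S x j θ + 1) := S_spec hT hx1 hθ1 j
    have c2 : F x j (S x j θ + 1) ≤ F x j (min ((t : ℕ) + d i - 1) (T - 1) + 1) :=
      F_mono hx0 j hSj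
    have c3 := constr ⟨hx0, hx1, hx2⟩ hij t
    have c4 : F x i (t : ℕ) ≤ F x i (S x i θ) := F_mono hx0 i (by simpa using ha)
    have c5 : F x i (S x i θ) < θ := F_S_lt hθ0 i
    linarith
  · norm_num
  · norm_num
  · norm_num

/-- set of positive breakpoint values of the cumulative distribution -/
noncomputable def Brk (x : J → Fin T → ℝ) : Finset ℝ :=
  (((Finset.univ : Finset J) ×ˢ Finset.range (T + 1)).image
    (fun p : J × ℕ => F x p.1 p.2)).filter (fun v => 0 < v)

lemma mem_Brk {x : J → Fin T → ℝ} {v : ℝ} :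
    v ∈ Brk x ↔ (∃ j : J, ∃ k ≤ T, F x j k = v) ∧ 0 < v := by
  simp [Brk, Nat.lt_succ_iff]

lemma one_mem_Brk {x : J → Fin T → ℝ} (hx1 : ∀ j, ∑ t, x j t = 1) (j : J) :
    (1 : ℝ) ∈ Brk x := by
  rw [mem_Brk]
  exact ⟨⟨j, T, le_rfl, F_top hx1 j le_rfl⟩, one_pos⟩

section core
variable {x : J → Fin T → ℝ} (hT : 0 < T)

/-- if `F x j k < min' (Brk x)` then it is zero -/
lemma F_small_eq_zero {x : J → Fin T → ℝ} (hx0 : ∀ j t, 0 ≤ x j t)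
    (hne : (Brk x).Nonempty) {j : J} {k : ℕ} (hk : k ≤ T)
    (h : F x j k < (Brk x).min' hne) : F x j k = 0 := by
  by_contra h0
  have hpos : 0 < F x j k := lt_of_le_of_ne (F_nonneg hx0 j k) (Ne.symm h0)
  have : F x j k ∈ Brk x := mem_Brk.mpr ⟨⟨j, k, hk, rfl⟩, hpos⟩
  exact absurd (Finset.min'_le _ _ this) (not_le.mpr h)

end core

lemma sumGE {x : J → Fin T → ℝ} (hx1 : ∀ j, ∑ t, x j t = 1) (i : J) (t : ℕ) :
    (∑ s ∈ Finset.univ.filter (fun s : Fin T => t ≤ (s : ℕ)), x i s) = 1 - F x i t := by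
  have hsplit := Finset.sum_filter_add_sum_filter_not Finset.univ
    (fun s : Fin T => (s : ℕ) < t) (x i)
  have hfe : Finset.univ.filter (fun s : Fin T => ¬ (s : ℕ) < t)
      = Finset.univ.filter (fun s : Fin T => t ≤ (s : ℕ)) := by
    ext s; simp [not_lt]
  rw [hfe, hx1 i] at hsplit
  have : F x i t = ∑ s ∈ Finset.univ.filter (fun s : Fin T => (s : ℕ) < t), x i s := rfl
  linarith

lemma sumLE (x : J → Fin T → ℝ) (j : J) (m : ℕ) :
    (∑ s ∈ Finset.univ.filter (fun s : Fin T => (s : ℕ) ≤ m), x j s) = F x j (m + 1) := by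
  have hfe : Finset.univ.filter (fun s : Fin T => (s : ℕ) ≤ m)
      = Finset.univ.filter (fun s : Fin T => (s : ℕ) < m + 1) := by
    ext s; simp [Nat.lt_succ_iff]
  rw [hfe]; rfl

lemma key {x : J → Fin T → ℝ} (hT : 0 < T) (hx : x ∈ schedulingPolytope T d P)
    {θ : ℝ} (hθ0 : 0 < θ) (hθ1 : θ ≤ 1) {i j : J} (hij : (i, j) ∈ P) (t : Fin T) :
    ¬ ((t : ℕ) ≤ S x i θ ∧ S x j θ ≤ min ((t : ℕ) + d i - 1) (T - 1)) := by
  obtain ⟨hx0, hx1, hx2⟩ := hx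
  rintro ⟨ha, hb⟩
  have c1 : θ ≤ F x j (S x j θ + 1) := S_spec hT hx1 hθ1 j
  have c2 : F x j (S x j θ + 1) ≤ F x j (min ((t : ℕ) + d i - 1) (T - 1) + 1) :=
    F_mono hx0 j (Nat.succ_le_succ hb)
  have c3 := constr ⟨hx0, hx1, hx2⟩ hij t
  have c4 : F x i (t : ℕ) ≤ F x i (S x i θ) := F_mono hx0 i ha
  have c5 : F x i (S x i θ) < θ := F_S_lt hθ0 i
  linarith

lemma a_pos {x : J → Fin T → ℝ} (hne : (Brk x).Nonempty) : 0 < (Brk x).min' hne :=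
  (mem_Brk.mp (Finset.min'_mem _ _)).2

lemma a_le_one {x : J → Fin T → ℝ} (hx1 : ∀ j, ∑ t, x j t = 1) (hne : (Brk x).Nonempty) :
    (Brk x).min' hne ≤ 1 := by
  obtain ⟨⟨j, k, hk, hF⟩, hv⟩ := mem_Brk.mp (Finset.min'_mem _ hne)
  exact Finset.min'_le _ _ (one_mem_Brk hx1 j)

lemma x_S_ge {x : J → Fin T → ℝ} (hT : 0 < T) (hx0 : ∀ j t, 0 ≤ x j t)
    (hx1 : ∀ j, ∑ t, x j t = 1) (hne : (Brk x).Nonempty) (j : J) (t : Fin T)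
    (hts : (t : ℕ) = S x j ((Brk x).min' hne)) : (Brk x).min' hne ≤ x j t := by
  set a := (Brk x).min' hne with ha
  have hlt : S x j a < T := S_lt hT hx1 (a_le_one hx1 hne) j
  have h1 : F x j (S x j a + 1) = F x j (S x j a) + x j ⟨S x j a, hlt⟩ := F_succ x j hlt
  have hteq : (⟨S x j a, hlt⟩ : Fin T) = t := Fin.ext (by simp [hts])
  rw [hteq] at h1
  have h2 : F x j (S x j a) < a := F_S_lt (a_pos hne) j
  have h3 : F x j (S x j a) = 0 := F_small_eq_zero hx0 hne (le_of_lt hlt) h2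
  have h4 : a ≤ F x j (S x j a + 1) := S_spec hT hx1 (a_le_one hx1 hne) j
  rw [h1, h3] at h4
  linarith

/-- the residual point -/
noncomputable def Zpt (x : J → Fin T → ℝ) (a : ℝ) : J → Fin T → ℝ :=
  fun j t => (x j t - a * Y x a j t) / (1 - a)

lemma decomp_pt {x : J → Fin T → ℝ} {a : ℝ} (ha : a ≠ 1) (j : J) (t : Fin T) :
    x j t = a * Y x a j t + (1 - a) * Zpt x a j t := by
  have h : (1 : ℝ) - a ≠ 0 := fun h => ha (by linarith)
  unfold Zpt
  field_simp
  ring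

lemma Z_mem {x : J → Fin T → ℝ} (hT : 0 < T) (hx : x ∈ schedulingPolytope T d P)
    (hne : (Brk x).Nonempty) (ha1 : (Brk x).min' hne < 1) :
    Zpt x ((Brk x).min' hne) ∈ schedulingPolytope T d P := by
  obtain ⟨hx0, hx1, hx2⟩ := hx
  set a := (Brk x).min' hne with haa
  have ha0 : 0 < a := a_pos hne
  have hale : a ≤ 1 := a_le_one hx1 hne
  have h1a : 0 < 1 - a := by linarith
  have hsum : ∀ (Sf : Finset (Fin T)) (u : J),
      ∑ s ∈ Sf, Zpt x a u s = ((∑ s ∈ Sf, x u s) - a * ∑ s ∈ Sf, Y x a u s) / (1 - a) := by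
    intro Sf u
    simp only [Zpt]
    rw [← Finset.sum_div]
    congr 1
    rw [Finset.sum_sub_distrib, Finset.mul_sum]
  refine ⟨?_, ?_, ?_⟩
  · intro j t
    unfold Zpt
    apply div_nonneg _ h1a.le
    by_cases hts : (t : ℕ) = S x j a
    · have hy : Y x a j t = 1 := by simp [Y, hts]
      have hgx := x_S_ge hT hx0 hx1 hne j t hts
      rw [hy, mul_one]
      linarith
    · have hy : Y x a j t = 0 := by simp [Y, hts]
      rw [hy, mul_zero]
      linarith [hx0 j t]
  · intro j
    rw [hsum Finset.univ j, hx1 j, Y_sum hT hx1 hale j]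
    field_simp
  · rintro ⟨i, j⟩ hij t
    rw [hsum _ i, hsum _ j, ← add_div, div_le_one h1a]
    have hc := hx2 (i, j) hij t
    have hAx := sumGE hx1 i (t : ℕ)
    have hBx := sumLE x j (min ((t : ℕ) + d i - 1) (T - 1))
    rw [hAx, hBx] at hc ⊢
    simp only [Y]
    rw [sum_ind (S_lt hT hx1 hale (x := x) i) (fun s : Fin T => (t : ℕ) ≤ (s : ℕ)),
      sum_ind (S_lt hT hx1 hale (x := x) j)
        (fun s : Fin T => (s : ℕ) ≤ min ((t : ℕ) + d i - 1) (T - 1))]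
    split_ifs with h1 h2 h2
    · exfalso
      exact key hT ⟨hx0, hx1, hx2⟩ ha0 hale hij t ⟨by simpa using h1, by simpa using h2⟩
    · linarith
    · linarith
    · have h1' : S x i a + 1 ≤ (t : ℕ) := by
        have := by simpa using h1
        omega
      have c1 : a ≤ F x i (S x i a + 1) := S_spec hT hx1 hale i
      have c2 : F x i (S x i a + 1) ≤ F x i (t : ℕ) := F_mono hx0 i h1'
      have h2' : min ((t : ℕ) + d i - 1) (T - 1) + 1 ≤ S x j a := by
        have := by simpa using h2
        omega
      have c3 : F x j (min ((t : ℕ) + d i - 1) (T - 1) + 1) ≤ F x j (S x j a) :=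
        F_mono hx0 j h2'
      have c4 : F x j (S x j a) < a := F_S_lt ha0 j
      have c5 : F x j (min ((t : ℕ) + d i - 1) (T - 1) + 1) = 0 := by
        apply F_small_eq_zero hx0 hne _ (by linarith)
        have := S_lt hT hx1 hale (x := x) j
        omega
      linarith

lemma binary_of_a_one {x : J → Fin T → ℝ} (hx0 : ∀ j t, 0 ≤ x j t)
    (hx1 : ∀ j, ∑ t, x j t = 1) (hne : (Brk x).Nonempty)
    (ha : 1 ≤ (Brk x).min' hne) : ∀ j t, x j t = 0 ∨ x j t = 1 := by
  intro j t
  have hF : ∀ k, k ≤ T → F x j k = 0 ∨ F x j k = 1 := by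
    intro k hk
    rcases eq_or_lt_of_le (F_le_one hx0 hx1 j k) with h | h
    · exact Or.inr h
    · exact Or.inl (F_small_eq_zero hx0 hne hk (lt_of_lt_of_le h ha))
  have hs : F x j ((t : ℕ) + 1) = F x j (t : ℕ) + x j t := by
    have := F_succ x j t.isLt
    rwa [Fin.eta] at this
  have hmono : F x j (t : ℕ) ≤ F x j ((t : ℕ) + 1) := F_mono hx0 j (Nat.le_succ _)
  rcases hF (t : ℕ) (le_of_lt t.isLt) with h1 | h1 <;>
    rcases hF ((t : ℕ) + 1) t.isLt with h2 | h2
  · left; linarith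
  · right; linarith
  · left; linarith
  · left; linarith

lemma sum_Zpt (x : J → Fin T → ℝ) (a : ℝ) (Sf : Finset (Fin T)) (u : J) :
    ∑ s ∈ Sf, Zpt x a u s = ((∑ s ∈ Sf, x u s) - a * ∑ s ∈ Sf, Y x a u s) / (1 - a) := by
  simp only [Zpt]
  rw [← Finset.sum_div]
  congr 1
  rw [Finset.sum_sub_distrib, Finset.mul_sum]

lemma F_Zpt {x : J → Fin T → ℝ} (hT : 0 < T) (hx1 : ∀ j, ∑ t, x j t = 1)
    {a : ℝ} (hale : a ≤ 1) (j : J) (k : ℕ) :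
    F (Zpt x a) j k = (F x j k - a * (if S x j a < k then 1 else 0)) / (1 - a) := by
  have h1 : F (Zpt x a) j k = ((F x j k) - a *
      ∑ s ∈ Finset.univ.filter (fun s : Fin T => (s : ℕ) < k), Y x a j s) / (1 - a) :=
    sum_Zpt x a _ j
  have h2 : ∑ s ∈ Finset.univ.filter (fun s : Fin T => (s : ℕ) < k), Y x a j s
      = if S x j a < k then 1 else 0 := by
    simp only [Y]
    rw [sum_ind (S_lt hT hx1 hale (x := x) j) (fun s : Fin T => (s : ℕ) < k)]
  rw [h1, h2]

lemma Brk_Zpt_card {x : J → Fin T → ℝ} (hT : 0 < T)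
    (hx : x ∈ schedulingPolytope T d P) (hne : (Brk x).Nonempty)
    (ha1 : (Brk x).min' hne < 1) :
    (Brk (Zpt x ((Brk x).min' hne))).card < (Brk x).card := by
  obtain ⟨hx0, hx1, hx2⟩ := hx
  set a := (Brk x).min' hne with haa
  have ha0 : 0 < a := a_pos hne
  have hale : a ≤ 1 := a_le_one hx1 hne
  have h1a : 0 < 1 - a := by linarith
  have hsub : Brk (Zpt x a) ⊆ ((Brk x).erase a).image (fun v => (v - a) / (1 - a)) := by
    intro w hw
    obtain ⟨⟨j, k, hk, hF⟩, hw0⟩ := mem_Brk.mp hw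
    have hFz := F_Zpt hT hx1 hale (x := x) j k
    rcases lt_or_ge (F x j k) a with hlt | hge
    · exfalso
      have hF0 : F x j k = 0 := F_small_eq_zero hx0 hne hk hlt
      have hind : ¬ S x j a < k := by
        intro hSk
        have c1 : a ≤ F x j (S x j a + 1) := S_spec hT hx1 hale j
        have c2 : F x j (S x j a + 1) ≤ F x j k := F_mono hx0 j hSk
        linarith
      rw [hF0, if_neg hind] at hFz
      rw [hFz] at hF
      simp at hF
      linarith
    · have hk0 : k ≠ 0 := by
        intro h
        rw [h, F_zero] at hge
        linarith
      obtain ⟨k', rfl⟩ := Nat.exists_eq_succ_of_ne_zero hk0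
      have hind : S x j a < k' + 1 := by
        have : S x j a ≤ k' := Nat.sInf_le hge
        omega
      rw [if_pos hind, mul_one] at hFz
      rw [hFz] at hF
      have hgt : a < F x j (k' + 1) := by
        by_contra hcon
        push_neg at hcon
        have : F x j (k' + 1) - a ≤ 0 := by linarith
        have : (F x j (k' + 1) - a) / (1 - a) ≤ 0 := div_nonpos_of_nonpos_of_nonneg this h1a.le
        linarith [hF ▸ this]
      refine Finset.mem_image.mpr ⟨F x j (k' + 1), ?_, hF⟩
      refine Finset.mem_erase.mpr ⟨ne_of_gt hgt, ?_⟩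
      exact mem_Brk.mpr ⟨⟨j, k' + 1, hk, rfl⟩, by linarith⟩
  calc (Brk (Zpt x a)).card ≤ (((Brk x).erase a).image (fun v => (v - a) / (1 - a))).card :=
        Finset.card_le_card hsub
    _ ≤ ((Brk x).erase a).card := Finset.card_image_le
    _ < (Brk x).card := Finset.card_erase_lt_of_mem (Finset.min'_mem _ hne)

/-- linear cost -/
noncomputable def cost (c x : J → Fin T → ℝ) : ℝ := ∑ j, ∑ t, c j t * x j t

lemma cost_decomp (c : J → Fin T → ℝ) {x : J → Fin T → ℝ} {a : ℝ} (ha : a ≠ 1) :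
    cost c x = a * cost c (Y x a) + (1 - a) * cost c (Zpt x a) := by
  have hpt : ∀ j t, c j t * x j t
      = a * (c j t * Y x a j t) + (1 - a) * (c j t * Zpt x a j t) := by
    intro j t
    rw [decomp_pt (x := x) ha j t]
    ring
  unfold cost
  simp only [hpt, Finset.sum_add_distrib, ← Finset.mul_sum]

lemma binary_of_empty {x : J → Fin T → ℝ} (hx1 : ∀ j, ∑ t, x j t = 1)
    (hne : ¬ (Brk x).Nonempty) : ∀ j t, x j t = 0 ∨ x j t = 1 := by
  intro j t
  exact absurd (one_mem_Brk hx1 j) (fun h => hne ⟨1, h⟩)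

lemma exists_binary_le (hT : 0 < T) (c : J → Fin T → ℝ) :
    ∀ n : ℕ, ∀ x : J → Fin T → ℝ, x ∈ schedulingPolytope T d P → (Brk x).card ≤ n →
    ∃ y ∈ schedulingPolytope T d P, (∀ j t, y j t = 0 ∨ y j t = 1) ∧ cost c y ≤ cost c x := by
  intro n
  induction n with
  | zero =>
    intro x hx hcard
    exact ⟨x, hx, binary_of_empty hx.2.1
      (fun h => absurd (Finset.card_pos.mpr h) (by omega)), le_rfl⟩
  | succ n ih =>
    intro x hx hcard
    by_cases hne : (Brk x).Nonempty
    · set a := (Brk x).min' hne with haa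
      have ha0 : 0 < a := a_pos hne
      have hale : a ≤ 1 := a_le_one hx.2.1 hne
      rcases lt_or_ge a 1 with ha1 | ha1
      · have hz := Z_mem hT hx hne ha1
        have hcz := Brk_Zpt_card hT hx hne ha1
        rw [← haa] at hcz
        obtain ⟨y, hy, hyb, hyc⟩ := ih (Zpt x a) hz (by omega)
        have hdec := cost_decomp c (x := x) (a := a) (ne_of_lt ha1)
        rcases le_total (cost c (Y x a)) (cost c (Zpt x a)) with hle | hle
        · exact ⟨Y x a, Y_mem hT hx ha0 hale, Y_binary x a, by nlinarith⟩
        · exact ⟨y, hy, hyb, by nlinarith⟩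
      · exact ⟨x, hx, binary_of_a_one hx.1 hx.2.1 hne ha1, le_rfl⟩
    · exact ⟨x, hx, binary_of_empty hx.2.1 hne, le_rfl⟩

lemma extreme_binary (hT : 0 < T) (x : J → Fin T → ℝ)
    (hx : x ∈ (schedulingPolytope T d P).extremePoints ℝ) :
    ∀ j t, x j t = 0 ∨ x j t = 1 := by
  rw [mem_extremePoints] at hx
  obtain ⟨hxQ, hext⟩ := hx
  by_cases hne : (Brk x).Nonempty
  · set a := (Brk x).min' hne with haa
    have ha0 : 0 < a := a_pos hne
    have hale : a ≤ 1 := a_le_one hxQ.2.1 hne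
    rcases lt_or_ge a 1 with ha1 | ha1
    · have hz := Z_mem hT hxQ hne ha1
      have hseg : x ∈ openSegment ℝ (Y x a) (Zpt x a) := by
        refine ⟨a, 1 - a, ha0, by linarith, by ring, ?_⟩
        funext j
        funext t
        simp only [Pi.add_apply, Pi.smul_apply, smul_eq_mul]
        exact (decomp_pt (x := x) (ne_of_lt ha1) j t).symm
      have heq := hext (Y x a) (Y_mem hT hxQ ha0 hale) (Zpt x a) hz hseg
      rw [← heq.1]
      exact Y_binary x a
    · exact binary_of_a_one hxQ.1 hxQ.2.1 hne ha1
  · exact binary_of_empty hxQ.2.1 hne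

end Stmt7Aux


/-- Every extreme point of the scheduling polytope `Q` is binary;
consequently, for every cost matrix `c`, if `Q` is nonempty then the linear objective
`∑_{j,t} c j t * x j t` attains its minimum over `Q` at some binary point. -/
theorem stmt_7 {J : Type*} [Fintype J] (T : ℕ) (hT : 0 < T)
    (d : J → ℕ) (hd : ∀ j, 0 < d j) (P : Set (J × J)) :
    (∀ x ∈ (schedulingPolytope T d P).extremePoints ℝ, ∀ j t, x j t = 0 ∨ x j t = 1) ∧
    (∀ c : J → Fin T → ℝ, (schedulingPolytope T d P).Nonempty →
      ∃ x ∈ schedulingPolytope T d P, (∀ j t, x j t = 0 ∨ x j t = 1) ∧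
        ∀ x' ∈ schedulingPolytope T d P,
          (∑ j, ∑ t, c j t * x j t) ≤ ∑ j, ∑ t, c j t * x' j t) := by
  classical
  constructor
  · exact fun x hx => Stmt7Aux.extreme_binary hT x hx
  · intro c hQ
    obtain ⟨x0, hx0⟩ := hQ
    set cand : Finset (J → Fin T → ℝ) :=
      ((Finset.univ : Finset (J → Fin T → Bool)).image
        (fun b j t => if b j t then (1 : ℝ) else 0)).filter
        (fun y => y ∈ schedulingPolytope T d P) with hcand
    have hmem_cand : ∀ y ∈ schedulingPolytope T d P, (∀ j t, y j t = 0 ∨ y j t = 1) →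
        y ∈ cand := by
      intro y hy hyb
      rw [hcand, Finset.mem_filter]
      refine ⟨Finset.mem_image.mpr ⟨fun j t => decide (y j t = 1), Finset.mem_univ _, ?_⟩, hy⟩
      funext j
      funext t
      rcases hyb j t with h | h <;> simp [h]
    obtain ⟨y0, hy0Q, hy0b, _⟩ := Stmt7Aux.exists_binary_le hT c (Stmt7Aux.Brk x0).card
      x0 hx0 le_rfl
    obtain ⟨ystar, hystar, hmin⟩ := Finset.exists_min_image cand (Stmt7Aux.cost c)
      ⟨y0, hmem_cand y0 hy0Q hy0b⟩
    have hystarQ : ystar ∈ schedulingPolytope T d P :=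
      (Finset.mem_filter.mp hystar).2
    have hystarb : ∀ j t, ystar j t = 0 ∨ ystar j t = 1 := by
      obtain ⟨b, _, rfl⟩ := Finset.mem_image.mp (Finset.mem_filter.mp hystar).1
      intro j t
      by_cases h : b j t <;> simp [h]
    refine ⟨ystar, hystarQ, hystarb, ?_⟩
    intro x' hx'
    obtain ⟨y', hy'Q, hy'b, hy'c⟩ := Stmt7Aux.exists_binary_le hT c (Stmt7Aux.Brk x').card
      x' hx' le_rfl
    have h1 : Stmt7Aux.cost c ystar ≤ Stmt7Aux.cost c y' :=
      hmin y' (hmem_cand y' hy'Q hy'b)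
    have h2 : Stmt7Aux.cost c ystar ≤ Stmt7Aux.cost c x' := le_trans h1 hy'c
    exact h2
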